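/- arXiv:1506.08312 — 2 statements merged into one kernel-verified Lean document; each statement's English description precedes it below -/
import Mathlib

section
/- The ARE value (2/(ν−2))·(Γ((ν+1)/2)/Γ(ν/2))² equals 1 in the limit ν → ∞, and is strictly greater than 1 for all finite ν > 2. -/
open Filter Real

/-- Log-convexity midpoint inequality for Gamma. -/
lemma gamma_midpoint_sq_le {x y : ℝ} (hx : 0 < x) (hy : 0 < y) :
    Real.Gamma ((x + y) / 2) ^ 2 ≤ Real.Gamma x * Real.Gamma y := by
  have h := Real.convexOn_log_Gamma.2 (Set.mem_Ioi.mpr hx) (Set.mem_Ioi.mpr hy)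
    (by norm_num : (0:ℝ) ≤ 1/2) (by norm_num : (0:ℝ) ≤ 1/2) (by norm_num)
  simp only [Function.comp_apply, smul_eq_mul] at h
  have hm : (1/2 : ℝ) * x + (1/2 : ℝ) * y = (x + y) / 2 := by ring
  rw [hm] at h
  have hgx := Real.Gamma_pos_of_pos hx
  have hgy := Real.Gamma_pos_of_pos hy
  have hgm := Real.Gamma_pos_of_pos (by positivity : 0 < (x + y) / 2)
  have h2 : Real.log (Real.Gamma ((x + y) / 2) ^ 2) ≤
      Real.log (Real.Gamma x * Real.Gamma y) := by
    rw [Real.log_pow, Real.log_mul hgx.ne' hgy.ne']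
    push_cast
    linarith
  exact (Real.log_le_log_iff (by positivity) (by positivity)).mp h2

lemma gamma_ratio_lower {ν : ℝ} (hν : 2 < ν) :
    (ν - 2) / 2 * Real.Gamma (ν / 2) ^ 2 < Real.Gamma ((ν + 1) / 2) ^ 2 := by
  have h1 : (0:ℝ) < (ν - 1) / 2 := by linarith
  have h2 : (0:ℝ) < (ν + 1) / 2 := by linarith
  have hmid : ((ν - 1) / 2 + (ν + 1) / 2) / 2 = ν / 2 := by ring
  have h := gamma_midpoint_sq_le h1 h2
  rw [hmid] at h
  have hrec : Real.Gamma ((ν + 1) / 2) = (ν - 1) / 2 * Real.Gamma ((ν - 1) / 2) := by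
    have : (ν + 1) / 2 = (ν - 1) / 2 + 1 := by ring
    rw [this, Real.Gamma_add_one h1.ne']
  have hg1 := Real.Gamma_pos_of_pos h1
  have hg2 := Real.Gamma_pos_of_pos h2
  have key : (ν - 2) / 2 * (Real.Gamma ((ν - 1) / 2) * Real.Gamma ((ν + 1) / 2)) <
      Real.Gamma ((ν + 1) / 2) ^ 2 := by
    have : Real.Gamma ((ν + 1) / 2) ^ 2 =
        (ν - 1) / 2 * (Real.Gamma ((ν - 1) / 2) * Real.Gamma ((ν + 1) / 2)) := by
      rw [sq, hrec]; ring
    rw [this]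
    have hpos : 0 < Real.Gamma ((ν - 1) / 2) * Real.Gamma ((ν + 1) / 2) := by positivity
    nlinarith
  nlinarith [mul_le_mul_of_nonneg_left h (by linarith : (0:ℝ) ≤ (ν - 2) / 2)]

lemma gamma_ratio_upper {ν : ℝ} (hν : 2 < ν) :
    Real.Gamma ((ν + 1) / 2) ^ 2 ≤ ν / 2 * Real.Gamma (ν / 2) ^ 2 := by
  have h1 : (0:ℝ) < ν / 2 := by linarith
  have h2 : (0:ℝ) < ν / 2 + 1 := by linarith
  have hmid : (ν / 2 + (ν / 2 + 1)) / 2 = (ν + 1) / 2 := by ring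
  have h := gamma_midpoint_sq_le h1 h2
  rw [hmid, Real.Gamma_add_one h1.ne'] at h
  nlinarith [Real.Gamma_pos_of_pos h1]

lemma ARE_gt_one {ν : ℝ} (hν : 2 < ν) :
    1 < (2 / (ν - 2)) * (Real.Gamma ((ν + 1) / 2) / Real.Gamma (ν / 2)) ^ 2 := by
  have hg := Real.Gamma_pos_of_pos (by linarith : (0:ℝ) < ν / 2)
  have h := gamma_ratio_lower hν
  rw [div_pow, div_mul_div_comm, lt_div_iff₀ (mul_pos (by linarith : (0:ℝ) < ν - 2) (by positivity))]
  nlinarith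

/-- The ARE function `g(ν) = (2/(ν−2))·(Γ((ν+1)/2)/Γ(ν/2))²` tends to `1` as
`ν → ∞` and is strictly greater than `1` for every finite `ν > 2`. -/
theorem ARE_limit_and_gt_one :
    Tendsto (fun ν : ℝ => (2 / (ν - 2)) *
        (Real.Gamma ((ν + 1) / 2) / Real.Gamma (ν / 2)) ^ 2) atTop (nhds 1) ∧
      ∀ ν : ℝ, 2 < ν →
        1 < (2 / (ν - 2)) * (Real.Gamma ((ν + 1) / 2) / Real.Gamma (ν / 2)) ^ 2 := by
  constructor
  · have hub : Tendsto (fun ν : ℝ => ν / (ν - 2)) atTop (nhds 1) := by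
      have : Tendsto (fun ν : ℝ => 1 + 2 / (ν - 2)) atTop (nhds (1 + 0)) := by
        exact tendsto_const_nhds.add
          (Tendsto.div_atTop tendsto_const_nhds (tendsto_atTop_add_const_right _ _ tendsto_id))
      rw [add_zero] at this
      refine this.congr' ?_
      filter_upwards [eventually_gt_atTop (2:ℝ)] with ν hν
      field_simp [sub_ne_zero.mpr hν.ne']
      ring
    have hlb : Tendsto (fun _ : ℝ => (1:ℝ)) atTop (nhds 1) := tendsto_const_nhds
    refine tendsto_of_tendsto_of_tendsto_of_le_of_le' hlb hub ?_ ?_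
    · filter_upwards [eventually_gt_atTop (2:ℝ)] with ν hν
      exact (ARE_gt_one hν).le
    · filter_upwards [eventually_gt_atTop (2:ℝ)] with ν hν
      have hg := Real.Gamma_pos_of_pos (by linarith : (0:ℝ) < ν / 2)
      have h := gamma_ratio_upper hν
      rw [div_pow, div_mul_div_comm,
        div_le_div_iff₀ (mul_pos (by linarith : (0:ℝ) < ν - 2) (by positivity))
          (by linarith : (0:ℝ) < ν - 2)]
      nlinarith
  · exact fun ν hν => ARE_gt_one hν
end

section
/- If U, V are independent uniform on S^{p−1} and A symmetric p×p, then E[(U^T A V)^4] ≤ C p^{-4} (∑_{i,j} A_{ij}^2)^2 = C p^{-4} tr(A^2)^2 for a universal constant C (e.g., C = 9). -/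
open MeasureTheory

set_option linter.unusedSectionVars false
set_option maxHeartbeats 1000000
open MeasureTheory

section Aux
variable {p : ℕ}

lemma norm_sq_eq (x : EuclideanSpace ℝ (Fin p)) : ‖x‖ ^ 2 = ∑ i, x i ^ 2 := by
  rw [EuclideanSpace.norm_eq, Real.sq_sqrt (by positivity)]
  exact Finset.sum_congr rfl fun i _ => by rw [Real.norm_eq_abs, sq_abs]

lemma abs_coord_le (x : EuclideanSpace ℝ (Fin p)) (i : Fin p) : |x i| ≤ ‖x‖ := by
  have h1 : x i ^ 2 ≤ ∑ j, x j ^ 2 :=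
    Finset.single_le_sum (f := fun j => x j ^ 2) (fun j _ => sq_nonneg _) (Finset.mem_univ i)
  have := Real.sqrt_le_sqrt h1
  rwa [Real.sqrt_sq_eq_abs, ← norm_sq_eq, Real.sqrt_sq (norm_nonneg _)] at this

/-- Sign cflip of one coordinate as a linear isometry equivalence. -/
noncomputable def cflip (a : Fin p) : EuclideanSpace ℝ (Fin p) ≃ₗᵢ[ℝ] EuclideanSpace ℝ (Fin p) where
  toFun x := WithLp.toLp 2 (fun i => if i = a then -x i else x i)
  invFun x := WithLp.toLp 2 (fun i => if i = a then -x i else x i)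
  left_inv x := by ext i; by_cases h : i = a <;> simp [h, PiLp.toLp_apply]
  right_inv x := by ext i; by_cases h : i = a <;> simp [h, PiLp.toLp_apply]
  map_add' x y := by ext i; by_cases h : i = a <;> simp [h, PiLp.toLp_apply] <;> ring
  map_smul' c x := by ext i; by_cases h : i = a <;> simp [h, PiLp.toLp_apply] <;> ring
  norm_map' x := by
    have h : ∀ y : EuclideanSpace ℝ (Fin p), ‖y‖ = Real.sqrt (∑ i, y i ^ 2) := by
      intro y
      rw [EuclideanSpace.norm_eq]
      congr 1
      exact Finset.sum_congr rfl fun i _ => by rw [Real.norm_eq_abs, sq_abs]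
    rw [h, h]
    congr 1
    exact Finset.sum_congr rfl fun i _ => by by_cases hi : i = a <;> simp [hi, PiLp.toLp_apply]

lemma cflip_apply (a : Fin p) (x : EuclideanSpace ℝ (Fin p)) (b : Fin p) :
    cflip a x b = if b = a then -x b else x b := rfl

lemma cflip_apply_self (a : Fin p) (x : EuclideanSpace ℝ (Fin p)) : cflip a x a = -x a := by
  rw [cflip_apply, if_pos rfl]

lemma cflip_apply_ne {a b : Fin p} (h : b ≠ a) (x : EuclideanSpace ℝ (Fin p)) :
    cflip a x b = x b := by rw [cflip_apply, if_neg h]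

end Aux

section Rot
variable {p : ℕ}

noncomputable def rotFun (a b : Fin p) (x : EuclideanSpace ℝ (Fin p)) :
    EuclideanSpace ℝ (Fin p) :=
  WithLp.toLp 2 (fun i => if i = a then (Real.sqrt 2)⁻¹ * (x a + x b)
    else if i = b then (Real.sqrt 2)⁻¹ * (x a - x b) else x i)

lemma sqrt2_inv_sq : (Real.sqrt 2)⁻¹ * (Real.sqrt 2)⁻¹ = 1/2 := by
  rw [← mul_inv, Real.mul_self_sqrt (by norm_num : (0:ℝ) ≤ 2)]; norm_num

lemma rotFun_invol (a b : Fin p) (hab : a ≠ b) : Function.Involutive (rotFun a b) := by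
  intro x
  ext i
  have h2 : (Real.sqrt 2)⁻¹ * (Real.sqrt 2)⁻¹ = 1/2 := sqrt2_inv_sq
  simp only [rotFun, PiLp.toLp_apply]
  by_cases hia : i = a
  · subst hia
    simp only [if_true, eq_self_iff_true, if_pos rfl, if_neg hab, if_neg (Ne.symm hab)]
    linear_combination 2 * x i * h2
  · by_cases hib : i = b
    · subst hib
      simp only [if_true, eq_self_iff_true, if_pos rfl, if_neg hia, if_neg hab, if_neg (Ne.symm hab)]
      linear_combination 2 * x i * h2
    · rw [if_neg hia, if_neg hib, if_neg hia, if_neg hib]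

lemma rotFun_apply_a (a b : Fin p) (x : EuclideanSpace ℝ (Fin p)) :
    rotFun a b x a = (Real.sqrt 2)⁻¹ * (x a + x b) := by simp [rotFun, PiLp.toLp_apply]

lemma rotFun_apply_b (a b : Fin p) (hab : a ≠ b) (x : EuclideanSpace ℝ (Fin p)) :
    rotFun a b x b = (Real.sqrt 2)⁻¹ * (x a - x b) := by
  simp [rotFun, Ne.symm hab, PiLp.toLp_apply]

lemma rotFun_apply_ne {a b i : Fin p} (hia : i ≠ a) (hib : i ≠ b)
    (x : EuclideanSpace ℝ (Fin p)) : rotFun a b x i = x i := by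
  simp only [rotFun, PiLp.toLp_apply]; rw [if_neg hia, if_neg hib]

lemma sum_split (a b : Fin p) (hab : a ≠ b) (f : Fin p → ℝ) :
    ∑ i, f i = f a + f b + ∑ i ∈ (Finset.univ.erase a).erase b, f i := by
  have hmem : b ∈ Finset.univ.erase a := Finset.mem_erase.2 ⟨Ne.symm hab, Finset.mem_univ b⟩
  rw [← Finset.add_sum_erase _ f (Finset.mem_univ a), ← Finset.add_sum_erase _ f hmem]
  ring

lemma rotFun_sumsq (a b : Fin p) (hab : a ≠ b) (x : EuclideanSpace ℝ (Fin p)) :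
    ∑ i, (rotFun a b x i)^2 = ∑ i, (x i)^2 := by
  have h2 : (Real.sqrt 2)⁻¹ * (Real.sqrt 2)⁻¹ = 1/2 := sqrt2_inv_sq
  rw [sum_split a b hab (fun i => (rotFun a b x i)^2), sum_split a b hab (fun i => (x i)^2)]
  have hrest : ∑ i ∈ (Finset.univ.erase a).erase b, (rotFun a b x i)^2
      = ∑ i ∈ (Finset.univ.erase a).erase b, (x i)^2 := by
    refine Finset.sum_congr rfl fun i hi => ?_
    have hib : i ≠ b := (Finset.mem_erase.1 hi).1
    have hia : i ≠ a := (Finset.mem_erase.1 (Finset.mem_erase.1 hi).2).1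
    rw [rotFun_apply_ne hia hib]
  rw [hrest, rotFun_apply_a, rotFun_apply_b a b hab]
  linear_combination ((x a + x b)^2 + (x a - x b)^2) * h2

noncomputable def rotIso (a b : Fin p) (hab : a ≠ b) :
    EuclideanSpace ℝ (Fin p) ≃ₗᵢ[ℝ] EuclideanSpace ℝ (Fin p) where
  toFun := rotFun a b
  invFun := rotFun a b
  left_inv := rotFun_invol a b hab
  right_inv := rotFun_invol a b hab
  map_add' x y := by
    ext i
    simp only [PiLp.add_apply]
    simp only [rotFun, PiLp.toLp_apply]
    by_cases hia : i = a
    · rw [if_pos hia, if_pos hia, if_pos hia]; simp only [PiLp.add_apply]; ring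
    · by_cases hib : i = b
      · rw [if_neg hia, if_pos hib, if_neg hia, if_pos hib, if_neg hia, if_pos hib]
        simp only [PiLp.add_apply]; ring
      · rw [if_neg hia, if_neg hib, if_neg hia, if_neg hib, if_neg hia, if_neg hib]
        simp only [PiLp.add_apply]
  map_smul' c x := by
    ext i
    simp only [PiLp.smul_apply, smul_eq_mul, RingHom.id_apply]
    simp only [rotFun, PiLp.toLp_apply]
    by_cases hia : i = a
    · rw [if_pos hia, if_pos hia]; simp only [PiLp.smul_apply, smul_eq_mul]; ring
    · by_cases hib : i = b
      · rw [if_neg hia, if_pos hib, if_neg hia, if_pos hib]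
        simp only [PiLp.smul_apply, smul_eq_mul]; ring
      · rw [if_neg hia, if_neg hib, if_neg hia, if_neg hib]
        simp only [PiLp.smul_apply, smul_eq_mul]
  norm_map' x := by
    have h : ∀ y : EuclideanSpace ℝ (Fin p), ‖y‖ = Real.sqrt (∑ i, y i ^ 2) := by
      intro y
      rw [EuclideanSpace.norm_eq]
      congr 1
      exact Finset.sum_congr rfl fun i _ => by rw [Real.norm_eq_abs, sq_abs]
    rw [h, h]
    congr 1
    exact rotFun_sumsq a b hab x

lemma rotIso_apply (a b : Fin p) (hab : a ≠ b) (x : EuclideanSpace ℝ (Fin p)) :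
    rotIso a b hab x = rotFun a b x := rfl

end Rot

section Meas
variable {p : ℕ} {μ : Measure (EuclideanSpace ℝ (Fin p))} [IsProbabilityMeasure μ]

lemma integral_comp_iso
    (hinv : ∀ O : EuclideanSpace ℝ (Fin p) ≃ₗᵢ[ℝ] EuclideanSpace ℝ (Fin p), μ.map O = μ)
    (O : EuclideanSpace ℝ (Fin p) ≃ₗᵢ[ℝ] EuclideanSpace ℝ (Fin p))
    (g : EuclideanSpace ℝ (Fin p) → ℝ) (hg : Continuous g) :
    ∫ x, g (O x) ∂μ = ∫ x, g x ∂μ := by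
  conv_rhs => rw [← hinv O]
  rw [integral_map (O.continuous.measurable.aemeasurable) hg.aestronglyMeasurable]

lemma integrable_sphere_bound (hsupp : ∀ᵐ x ∂μ, ‖x‖ = 1)
    (g : EuclideanSpace ℝ (Fin p) → ℝ) (hg : Continuous g) (C : ℝ)
    (hC : ∀ x, ‖x‖ = 1 → |g x| ≤ C) : Integrable g μ := by
  refine Integrable.mono' (integrable_const C) hg.aestronglyMeasurable ?_
  filter_upwards [hsupp] with x hx
  rw [Real.norm_eq_abs]; exact hC x hx

lemma cont_coord (i : Fin p) : Continuous fun x : EuclideanSpace ℝ (Fin p) => x i :=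
  (EuclideanSpace.proj i).continuous

lemma cont_mono4 (i j k l : Fin p) :
    Continuous fun x : EuclideanSpace ℝ (Fin p) => x i * x j * x k * x l :=
  (((cont_coord i).mul (cont_coord j)).mul (cont_coord k)).mul (cont_coord l)

lemma abs_coord_le' (x : EuclideanSpace ℝ (Fin p)) (i : Fin p) : |x i| ≤ ‖x‖ := by
  have h1 : x i ^ 2 ≤ ∑ j, x j ^ 2 :=
    Finset.single_le_sum (f := fun j => x j ^ 2) (fun j _ => sq_nonneg _) (Finset.mem_univ i)
  have h2 : ∑ j, x j ^ 2 = ‖x‖ ^ 2 := by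
    rw [EuclideanSpace.norm_eq, Real.sq_sqrt (by positivity)]
    exact (Finset.sum_congr rfl fun i _ => by rw [Real.norm_eq_abs, sq_abs]).symm
  have := Real.sqrt_le_sqrt (h1.trans h2.le)
  rwa [Real.sqrt_sq_eq_abs, Real.sqrt_sq (norm_nonneg _)] at this

lemma abs_mono4_le {x : EuclideanSpace ℝ (Fin p)} (hx : ‖x‖ = 1) (i j k l : Fin p) :
    |x i * x j * x k * x l| ≤ 1 := by
  have h : ∀ m : Fin p, |x m| ≤ 1 := fun m => (abs_coord_le' x m).trans hx.le
  calc |x i * x j * x k * x l| = |x i| * |x j| * |x k| * |x l| := by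
        rw [abs_mul, abs_mul, abs_mul]
    _ ≤ 1 * 1 * 1 * 1 := by
        gcongr <;> first | exact abs_nonneg _ | exact h _
    _ = 1 := by norm_num

lemma integrable_mono4 (hsupp : ∀ᵐ x ∂μ, ‖x‖ = 1) (i j k l : Fin p) :
    Integrable (fun x : EuclideanSpace ℝ (Fin p) => x i * x j * x k * x l) μ :=
  integrable_sphere_bound hsupp _ (cont_mono4 i j k l) 1 fun x hx => abs_mono4_le hx i j k l

lemma integral_zero_of_neg
    (hinv : ∀ O : EuclideanSpace ℝ (Fin p) ≃ₗᵢ[ℝ] EuclideanSpace ℝ (Fin p), μ.map O = μ)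
    (O : EuclideanSpace ℝ (Fin p) ≃ₗᵢ[ℝ] EuclideanSpace ℝ (Fin p))
    (g : EuclideanSpace ℝ (Fin p) → ℝ) (hg : Continuous g)
    (hneg : ∀ x, g (O x) = -g x) : ∫ x, g x ∂μ = 0 := by
  have h1 : ∫ x, g (O x) ∂μ = ∫ x, g x ∂μ := integral_comp_iso hinv O g hg
  have h2 : ∫ x, g (O x) ∂μ = -∫ x, g x ∂μ := by
    simp_rw [hneg]; exact integral_neg g
  linarith

end Meas

section Moments
variable {p : ℕ} {μ : Measure (EuclideanSpace ℝ (Fin p))} [IsProbabilityMeasure μ]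
variable (hsupp : ∀ᵐ x ∂μ, ‖x‖ = 1)
variable (hinv : ∀ O : EuclideanSpace ℝ (Fin p) ≃ₗᵢ[ℝ] EuclideanSpace ℝ (Fin p), μ.map O = μ)

lemma integral_reorder (f g : EuclideanSpace ℝ (Fin p) → ℝ) (h : ∀ x, f x = g x) :
    ∫ x, f x ∂μ = ∫ x, g x ∂μ := integral_congr_ae (.of_forall h)

include hinv in
lemma mom_vanish_last (i j k l : Fin p) (hi : i ≠ l) (hj : j ≠ l) (hk : k ≠ l) :
    ∫ x, x i * x j * x k * x l ∂μ = 0 := by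
  refine integral_zero_of_neg hinv (cflip l) _ (cont_mono4 i j k l) fun x => ?_
  show cflip l x i * cflip l x j * cflip l x k * cflip l x l = _
  rw [cflip_apply_ne hi, cflip_apply_ne hj, cflip_apply_ne hk, cflip_apply_self]
  ring

lemma integral_five {f1 f2 f3 f4 f5 : EuclideanSpace ℝ (Fin p) → ℝ}
    (h1 : Integrable f1 μ) (h2 : Integrable f2 μ) (h3 : Integrable f3 μ)
    (h4 : Integrable f4 μ) (h5 : Integrable f5 μ) :
    ∫ x, (f1 x + f2 x + f3 x + f4 x + f5 x) ∂μ =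
      ∫ x, f1 x ∂μ + ∫ x, f2 x ∂μ + ∫ x, f3 x ∂μ + ∫ x, f4 x ∂μ + ∫ x, f5 x ∂μ := by
  have a12 : Integrable (fun x => f1 x + f2 x) μ := h1.add h2
  have a123 : Integrable (fun x => f1 x + f2 x + f3 x) μ := a12.add h3
  have a1234 : Integrable (fun x => f1 x + f2 x + f3 x + f4 x) μ := a123.add h4
  rw [integral_add a1234 h5, integral_add a123 h4, integral_add a12 h3, integral_add h1 h2]

lemma sqrt2_inv_pow4 : ((Real.sqrt 2)⁻¹)^4 = 1/4 := by
  rw [show ((Real.sqrt 2)⁻¹)^4 = ((Real.sqrt 2)⁻¹ * (Real.sqrt 2)⁻¹)^2 by ring, sqrt2_inv_sq]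
  norm_num

include hsupp hinv in
lemma mom4_rel (i j : Fin p) (hij : i ≠ j) :
    ∫ x, x i*x i*x i*x i ∂μ = ∫ x, x j*x j*x j*x j ∂μ ∧
    ∫ x, x i*x i*x j*x j ∂μ = (∫ x, x i*x i*x i*x i ∂μ)/3 := by
  have hc4 := (sqrt2_inv_pow4 : ((Real.sqrt 2)⁻¹)^4 = 1/4)
  have hIa : ∀ a b c d : Fin p, Integrable
      (fun x : EuclideanSpace ℝ (Fin p) => x a * x b * x c * x d) μ :=
    fun a b c d => integrable_mono4 hsupp a b c d
  -- first rotation identity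
  have key : ∀ (s : ℝ) (hs : s = 1 ∨ s = -1) (gi : Fin p),
      (gi = i ∨ gi = j) →
      (∀ x : EuclideanSpace ℝ (Fin p),
        (rotIso i j hij x gi)^4 =
        (1/4)*(x i*x i*x i*x i) + s*(x i*x i*x i*x j) + (3/2)*(x i*x i*x j*x j)
          + s*(x i*x j*x j*x j) + (1/4)*(x j*x j*x j*x j)) →
      ∫ x, x gi * x gi * x gi * x gi ∂μ =
        (1/4)*(∫ x, x i*x i*x i*x i ∂μ) + (3/2)*(∫ x, x i*x i*x j*x j ∂μ)
          + (1/4)*(∫ x, x j*x j*x j*x j ∂μ) := by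
    intro s hs gi hgi hpt
    have h0 : ∫ x, x gi * x gi * x gi * x gi ∂μ
        = ∫ x, (rotIso i j hij x gi)^4 ∂μ := by
      refine (integral_comp_iso hinv (rotIso i j hij)
        (fun x => x gi * x gi * x gi * x gi) (cont_mono4 gi gi gi gi)).symm.trans ?_
      exact integral_reorder _ _ fun x => by ring
    rw [h0, integral_reorder _ _ hpt,
      integral_five ((hIa i i i i).const_mul (1/4)) ((hIa i i i j).const_mul s)
        ((hIa i i j j).const_mul (3/2)) ((hIa i j j j).const_mul s)
        ((hIa j j j j).const_mul (1/4)),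
      integral_const_mul, integral_const_mul, integral_const_mul, integral_const_mul,
      integral_const_mul,
      mom_vanish_last hinv i i i j hij hij hij,
      integral_reorder (fun x => x i*x j*x j*x j) (fun x => x j*x j*x j*x i)
        (fun x => by ring),
      mom_vanish_last hinv j j j i (Ne.symm hij) (Ne.symm hij) (Ne.symm hij)]
    ring
  have h1 := key 1 (Or.inl rfl) i (Or.inl rfl) (fun x => by
    rw [rotIso_apply, rotFun_apply_a]
    linear_combination (x i + x j)^4 * hc4)
  have h2 := key (-1) (Or.inr rfl) j (Or.inr rfl) (fun x => by
    rw [rotIso_apply, rotFun_apply_b i j hij]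
    linear_combination (x i - x j)^4 * hc4)
  constructor
  · linarith
  · linarith

end Moments

section Values
variable {p : ℕ} {μ : Measure (EuclideanSpace ℝ (Fin p))} [IsProbabilityMeasure μ]
variable (hsupp : ∀ᵐ x ∂μ, ‖x‖ = 1)
variable (hinv : ∀ O : EuclideanSpace ℝ (Fin p) ≃ₗᵢ[ℝ] EuclideanSpace ℝ (Fin p), μ.map O = μ)

include hsupp in
lemma mom_sum_one : ∑ i : Fin p, ∑ j : Fin p, (∫ x, x i * x i * x j * x j ∂μ) = 1 := by
  have h2 : ∫ x, (∑ i, x i ^ 2)^2 ∂μ = 1 := by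
    have h1 : (fun x : EuclideanSpace ℝ (Fin p) => (∑ i, x i ^ 2)^2) =ᵐ[μ]
        (fun _ => (1:ℝ)) := by
      filter_upwards [hsupp] with x hx
      rw [← norm_sq_eq, hx]; norm_num
    rw [integral_congr_ae h1, integral_const, probReal_univ]
    simp
  rw [← h2, integral_reorder (fun x => (∑ i, x i ^2)^2)
      (fun x => ∑ i, ∑ j, x i * x i * x j * x j) (fun x => by
    show (∑ i, x i ^ 2)^2 = ∑ i, ∑ j, x i * x i * x j * x j
    rw [sq, Finset.sum_mul_sum]
    exact Finset.sum_congr rfl fun i _ => Finset.sum_congr rfl fun j _ => by ring),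
    integral_finset_sum _ (fun i _ =>
      integrable_finset_sum _ fun j _ => integrable_mono4 hsupp i i j j)]
  exact Finset.sum_congr rfl fun i _ =>
    (integral_finset_sum _ fun j _ => integrable_mono4 hsupp i i j j).symm

include hsupp hinv in
lemma mom4_value (hp : 0 < p) (i : Fin p) :
    ∫ x, x i * x i * x i * x i ∂μ = 3/((p:ℝ)*((p:ℝ)+2)) := by
  set m := ∫ x, x i * x i * x i * x i ∂μ with hm
  have hall : ∀ j : Fin p, ∫ x, x j * x j * x j * x j ∂μ = m := by
    intro j
    by_cases hji : j = i
    · rw [hji]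
    · exact (mom4_rel hsupp hinv j i hji).1
  have hcross : ∀ j k : Fin p, j ≠ k → ∫ x, x j * x j * x k * x k ∂μ = m/3 := by
    intro j k hjk
    rw [(mom4_rel hsupp hinv j k hjk).2, hall j]
  have hsum := mom_sum_one hsupp (μ := μ)
  have hsum2 : ∑ j : Fin p, ∑ k : Fin p, (∫ x, x j * x j * x k * x k ∂μ)
      = ∑ j : Fin p, ∑ k : Fin p, (m/3 + (if j = k then m - m/3 else 0)) := by
    refine Finset.sum_congr rfl fun j _ => Finset.sum_congr rfl fun k _ => ?_
    by_cases hjk : j = k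
    · subst hjk; rw [hall j, if_pos rfl]; ring
    · rw [hcross j k hjk, if_neg hjk]; ring
  rw [hsum2] at hsum
  simp only [Finset.sum_add_distrib, Finset.sum_const, Finset.card_univ, Fintype.card_fin,
    Finset.sum_ite_eq, Finset.mem_univ, if_true] at hsum
  have hp' : (0:ℝ) < p := by exact_mod_cast hp
  have : (p:ℝ) * ((p:ℝ) * (m/3) + (m - m/3)) = 1 := by
    rw [← hsum]; push_cast; ring
  have hne : (p:ℝ) * ((p:ℝ)+2) ≠ 0 := by positivity
  field_simp
  nlinarith [this]

include hsupp hinv in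
lemma momC_value (hp : 0 < p) (i j : Fin p) (hij : i ≠ j) :
    ∫ x, x i * x i * x j * x j ∂μ = 1/((p:ℝ)*((p:ℝ)+2)) := by
  rw [(mom4_rel hsupp hinv i j hij).2, mom4_value hsupp hinv hp i]
  ring

end Values

section Master
variable {p : ℕ} {μ : Measure (EuclideanSpace ℝ (Fin p))} [IsProbabilityMeasure μ]
variable (hsupp : ∀ᵐ x ∂μ, ‖x‖ = 1)
variable (hinv : ∀ O : EuclideanSpace ℝ (Fin p) ≃ₗᵢ[ℝ] EuclideanSpace ℝ (Fin p), μ.map O = μ)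

include hsupp hinv in
lemma mom_formula (hp : 0 < p) (i j k l : Fin p) :
    ∫ x, x i * x j * x k * x l ∂μ =
      1/((p:ℝ)*((p:ℝ)+2)) * ((if i = j then (1:ℝ) else 0)*(if k = l then (1:ℝ) else 0)
        + (if i = k then (1:ℝ) else 0)*(if j = l then (1:ℝ) else 0)
        + (if i = l then (1:ℝ) else 0)*(if j = k then (1:ℝ) else 0)) := by
  by_cases hij : i = j
  · subst hij
    by_cases hkl : k = l
    · subst hkl
      by_cases hik : i = k
      · subst hik
        rw [mom4_value hsupp hinv hp i]
        simp
        rw [← mul_inv]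
        ring_nf
      · rw [momC_value hsupp hinv hp i k hik]
        simp only [if_pos rfl, if_neg hik]
        norm_num
    · by_cases hik : i = k
      · subst hik
        rw [mom_vanish_last hinv i i i l hkl hkl hkl]
        simp [hkl]
      · by_cases hil : i = l
        · subst hil
          rw [integral_reorder (fun x : EuclideanSpace ℝ (Fin p) => x i * x i * x k * x i)
            (fun x => x i * x i * x i * x k) (fun x => by ring),
            mom_vanish_last hinv i i i k hik hik hik]
          simp [hik, Ne.symm hik]
        · rw [integral_reorder (fun x : EuclideanSpace ℝ (Fin p) => x i * x i * x k * x l)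
            (fun x => x i * x i * x l * x k) (fun x => by ring),
            mom_vanish_last hinv i i l k hik hik (fun h => hkl h.symm)]
          simp [hkl, hik, hil]
  · by_cases hkl : k = l
    · subst hkl
      by_cases hjk : j = k
      · subst hjk
        rw [integral_reorder (fun x : EuclideanSpace ℝ (Fin p) => x i * x j * x j * x j)
          (fun x => x j * x j * x j * x i) (fun x => by ring),
          mom_vanish_last hinv j j j i (fun h => hij h.symm) (fun h => hij h.symm)
            (fun h => hij h.symm)]
        simp [hij]
      · by_cases hik : i = k
        · subst hik
          rw [integral_reorder (fun x : EuclideanSpace ℝ (Fin p) => x i * x j * x i * x i)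
            (fun x => x i * x i * x i * x j) (fun x => by ring),
            mom_vanish_last hinv i i i j hij hij hij]
          simp [hij, hjk]
        · rw [integral_reorder (fun x : EuclideanSpace ℝ (Fin p) => x i * x j * x k * x k)
            (fun x => x j * x k * x k * x i) (fun x => by ring),
            mom_vanish_last hinv j k k i (fun h => hij h.symm) (fun h => hik h.symm)
              (fun h => hik h.symm)]
          simp [hij, hik]
    · by_cases hik : i = k
      · subst hik
        by_cases hjl : j = l
        · subst hjl
          rw [integral_reorder (fun x : EuclideanSpace ℝ (Fin p) => x i * x j * x i * x j)
            (fun x => x i * x i * x j * x j) (fun x => by ring),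
            momC_value hsupp hinv hp i j hij]
          simp only [if_pos rfl, if_neg hij, if_neg (Ne.symm hij)]
          norm_num
        · rw [integral_reorder (fun x : EuclideanSpace ℝ (Fin p) => x i * x j * x i * x l)
            (fun x => x i * x i * x l * x j) (fun x => by ring),
            mom_vanish_last hinv i i l j hij hij (fun h => hjl h.symm)]
          simp [hij, hjl, Ne.symm hij]
      · by_cases hil : i = l
        · subst hil
          by_cases hjk : j = k
          · subst hjk
            rw [integral_reorder (fun x : EuclideanSpace ℝ (Fin p) => x i * x j * x j * x i)
              (fun x => x i * x i * x j * x j) (fun x => by ring),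
              momC_value hsupp hinv hp i j hij]
            simp only [if_pos rfl, if_neg hij, if_neg (Ne.symm hij)]
            norm_num
          · rw [integral_reorder (fun x : EuclideanSpace ℝ (Fin p) => x i * x j * x k * x i)
              (fun x => x i * x k * x i * x j) (fun x => by ring),
              mom_vanish_last hinv i k i j hij (fun h => hjk h.symm) hij]
            simp [hij, hjk, hik]
        · rw [integral_reorder (fun x : EuclideanSpace ℝ (Fin p) => x i * x j * x k * x l)
            (fun x => x j * x k * x l * x i) (fun x => by ring),
            mom_vanish_last hinv j k l i (fun h => hij h.symm) (fun h => hik h.symm)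
              (fun h => hil h.symm)]
          simp [hij, hik, hil]

end Master


lemma expand4 {ι : Type*} [Fintype ι] (f : ι → ℝ) :
    (∑ j, f j)^4 = ∑ j1, ∑ j2, ∑ j3, ∑ j4, f j1 * f j2 * f j3 * f j4 := by
  rw [show ((∑ j, f j)^4) = (∑ j, f j) * ((∑ j, f j) * ((∑ j, f j) * (∑ j, f j))) by ring]
  simp only [Finset.sum_mul, Finset.mul_sum]
  repeat (refine Finset.sum_congr rfl fun _ _ => ?_)
  ring

lemma expand2 {ι : Type*} [Fintype ι] (g : ι → ι → ℝ) :
    (∑ i, ∑ j, g i j)^2 = ∑ i1, ∑ j1, ∑ i2, ∑ j2, g i1 j1 * g i2 j2 := by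
  rw [sq]
  simp only [Finset.sum_mul, Finset.mul_sum]
  repeat (refine Finset.sum_congr rfl fun _ _ => ?_)
  ring

lemma collapse {ι : Type*} [Fintype ι] [DecidableEq ι] (c : ℝ) (B : ι → ι → ℝ) :
    ∑ i1 : ι, ∑ j1 : ι, ∑ i2 : ι, ∑ j2 : ι, (B i1 j1 * B i2 j2) *
      (c * ((if i1 = j1 then (1:ℝ) else 0)*(if i2 = j2 then (1:ℝ) else 0)
        + (if i1 = i2 then (1:ℝ) else 0)*(if j1 = j2 then (1:ℝ) else 0)
        + (if i1 = j2 then (1:ℝ) else 0)*(if j1 = i2 then (1:ℝ) else 0)))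
    = c * ((∑ i, B i i)^2 + (∑ i, ∑ j, B i j * B i j) + (∑ i, ∑ j, B i j * B j i)) := by
  have T1 : ∀ x : ι, (∑ x1 : ι, ∑ x2 : ι, if x = x1 then B x x1 * B x2 x2 * c else 0)
      = ∑ x2 : ι, B x x * B x2 x2 * c := by
    intro x
    rw [Finset.sum_comm]
    refine Finset.sum_congr rfl fun x2 _ => ?_
    simp
  have T3 : ∀ x x1 : ι, (∑ x2 : ι, ∑ x3 : ι,
      if x1 = x2 then if x = x3 then B x x1 * B x2 x3 * c else 0 else 0)
      = B x x1 * B x1 x * c := by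
    intro x x1
    have h : ∀ x2 : ι, (∑ x3 : ι,
        if x1 = x2 then if x = x3 then B x x1 * B x2 x3 * c else 0 else 0)
        = if x1 = x2 then B x x1 * B x2 x * c else 0 := by
      intro x2
      split_ifs with h
      · simp
      · simp
    simp_rw [h]
    simp
  simp only [mul_add, Finset.sum_add_distrib, mul_ite, ite_mul, mul_one, one_mul,
    mul_zero, zero_mul, Finset.sum_ite_eq, Finset.sum_ite_eq', Finset.mem_univ, if_true]
  rw [Finset.sum_congr rfl fun x _ => T1 x]
  rw [Finset.sum_congr rfl fun x _ => Finset.sum_congr rfl fun x1 _ => T3 x x1]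
  rw [sq, Finset.sum_mul_sum]
  simp only [Finset.mul_sum]
  congr 1
  congr 1
  · exact Finset.sum_congr rfl fun i _ => Finset.sum_congr rfl fun j _ => by ring
  · exact Finset.sum_congr rfl fun i _ => Finset.sum_congr rfl fun j _ => by ring
  · exact Finset.sum_congr rfl fun i _ => Finset.sum_congr rfl fun j _ => by ring

section IntAB
variable {p : ℕ} {μ : Measure (EuclideanSpace ℝ (Fin p))} [IsProbabilityMeasure μ]
variable (hsupp : ∀ᵐ x ∂μ, ‖x‖ = 1)
variable (hinv : ∀ O : EuclideanSpace ℝ (Fin p) ≃ₗᵢ[ℝ] EuclideanSpace ℝ (Fin p), μ.map O = μ)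

lemma integral_quadsum (F : Fin p → Fin p → Fin p → Fin p → EuclideanSpace ℝ (Fin p) → ℝ)
    (hF : ∀ j1 j2 j3 j4, Integrable (F j1 j2 j3 j4) μ) :
    ∫ x, ∑ j1, ∑ j2, ∑ j3, ∑ j4, F j1 j2 j3 j4 x ∂μ
      = ∑ j1, ∑ j2, ∑ j3, ∑ j4, ∫ x, F j1 j2 j3 j4 x ∂μ := by
  rw [integral_finset_sum _ (fun j1 _ => integrable_finset_sum _ fun j2 _ =>
    integrable_finset_sum _ fun j3 _ => integrable_finset_sum _ fun j4 _ => hF j1 j2 j3 j4)]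
  refine Finset.sum_congr rfl fun j1 _ => ?_
  rw [integral_finset_sum _ (fun j2 _ => integrable_finset_sum _ fun j3 _ =>
    integrable_finset_sum _ fun j4 _ => hF j1 j2 j3 j4)]
  refine Finset.sum_congr rfl fun j2 _ => ?_
  rw [integral_finset_sum _ (fun j3 _ => integrable_finset_sum _ fun j4 _ => hF j1 j2 j3 j4)]
  refine Finset.sum_congr rfl fun j3 _ => ?_
  exact integral_finset_sum _ (fun j4 _ => hF j1 j2 j3 j4)

include hsupp hinv in
lemma intA (hp : 0 < p) (w : Fin p → ℝ) :
    ∫ x, (∑ j, w j * x j)^4 ∂μ = 3/((p:ℝ)*((p:ℝ)+2)) * (∑ j, w j^2)^2 := by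
  have h1 : ∀ x : EuclideanSpace ℝ (Fin p), (∑ j, w j * x j)^4
      = ∑ j1, ∑ j2, ∑ j3, ∑ j4,
          ((fun a b => w a * w b) j1 j2 * (fun a b => w a * w b) j3 j4)
            * (x j1 * x j2 * x j3 * x j4) := by
    intro x
    rw [expand4 (fun j => w j * x j)]
    exact Finset.sum_congr rfl fun _ _ => Finset.sum_congr rfl fun _ _ =>
      Finset.sum_congr rfl fun _ _ => Finset.sum_congr rfl fun _ _ => by ring
  rw [integral_reorder _ _ h1,
    integral_quadsum _ (fun j1 j2 j3 j4 => (integrable_mono4 hsupp j1 j2 j3 j4).const_mul _)]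
  simp_rw [integral_const_mul, mom_formula hsupp hinv hp]
  refine Eq.trans (collapse (1/((p:ℝ)*((p:ℝ)+2))) (fun a b => w a * w b)) ?_
  have e1 : (∑ i, (fun a b => w a * w b) i i) = ∑ i, w i ^2 :=
    Finset.sum_congr rfl fun i _ => by ring
  have e2 : (∑ i, ∑ j, (fun a b => w a * w b) i j * (fun a b => w a * w b) i j)
      = (∑ j, w j^2)^2 := by
    rw [sq, Finset.sum_mul_sum]
    exact Finset.sum_congr rfl fun i _ => Finset.sum_congr rfl fun j _ => by ring
  have e3 : (∑ i, ∑ j, (fun a b => w a * w b) i j * (fun a b => w a * w b) j i)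
      = (∑ j, w j^2)^2 := by
    rw [sq, Finset.sum_mul_sum]
    exact Finset.sum_congr rfl fun i _ => Finset.sum_congr rfl fun j _ => by ring
  rw [e1, e2, e3]
  ring

include hsupp hinv in
lemma intB (hp : 0 < p) (B : Fin p → Fin p → ℝ) :
    ∫ x, (∑ i, ∑ j, B i j * (x i * x j))^2 ∂μ
      = 1/((p:ℝ)*((p:ℝ)+2)) * ((∑ i, B i i)^2
          + (∑ i, ∑ j, B i j * B i j) + (∑ i, ∑ j, B i j * B j i)) := by
  have h1 : ∀ x : EuclideanSpace ℝ (Fin p), (∑ i, ∑ j, B i j * (x i * x j))^2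
      = ∑ j1, ∑ j2, ∑ j3, ∑ j4, (B j1 j2 * B j3 j4) * (x j1 * x j2 * x j3 * x j4) := by
    intro x
    rw [expand2 (fun i j => B i j * (x i * x j))]
    exact Finset.sum_congr rfl fun _ _ => Finset.sum_congr rfl fun _ _ =>
      Finset.sum_congr rfl fun _ _ => Finset.sum_congr rfl fun _ _ => by ring
  rw [integral_reorder _ _ h1,
    integral_quadsum _ (fun j1 j2 j3 j4 => (integrable_mono4 hsupp j1 j2 j3 j4).const_mul _)]
  simp_rw [integral_const_mul, mom_formula hsupp hinv hp]
  exact collapse (1/((p:ℝ)*((p:ℝ)+2))) B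

end IntAB


/-- If `U, V` are independent and uniform on the unit sphere `S^{p-1}` and `A` is a
symmetric `p × p` matrix, then `E[(Uᵀ A V)⁴] ≤ C p^{-4} tr(A²)²` with `C = 9`. -/
theorem sphere_bilinear_form_fourth_moment (p : ℕ) (hp : 0 < p)
    (μ : Measure (EuclideanSpace ℝ (Fin p))) [IsProbabilityMeasure μ]
    (hsupp : ∀ᵐ x ∂μ, ‖x‖ = 1)
    (hinv : ∀ O : EuclideanSpace ℝ (Fin p) ≃ₗᵢ[ℝ] EuclideanSpace ℝ (Fin p),
      μ.map O = μ)
    (A : Matrix (Fin p) (Fin p) ℝ) (hA : A.IsSymm) :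
    ∫ z, (∑ i : Fin p, ∑ j : Fin p, z.1 i * A i j * z.2 j) ^ 4 ∂(μ.prod μ) ≤
      9 / (p : ℝ) ^ 4 * (Matrix.trace (A * A)) ^ 2 := by
  have hp' : (0:ℝ) < (p:ℝ) := by exact_mod_cast hp
  set q : ℝ := (p:ℝ)*((p:ℝ)+2) with hqdef
  have hq : 0 < q := by positivity
  -- a.e. statements on the product
  have hS : MeasurableSet {x : EuclideanSpace ℝ (Fin p) | ‖x‖ = 1} :=
    (isClosed_eq continuous_norm continuous_const).measurableSet
  have hμ0 : μ {x : EuclideanSpace ℝ (Fin p) | ¬ ‖x‖ = 1} = 0 := ae_iff.mp hsupp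
  have hae1 : ∀ᵐ z ∂(μ.prod μ), ‖z.1‖ = 1 := by
    rw [ae_iff]
    have : {z : EuclideanSpace ℝ (Fin p) × EuclideanSpace ℝ (Fin p) | ¬ ‖z.1‖ = 1}
        = {x : EuclideanSpace ℝ (Fin p) | ¬ ‖x‖ = 1} ×ˢ Set.univ := by
      ext z; simp
    rw [this, Measure.prod_prod, hμ0, zero_mul]
  have hae2 : ∀ᵐ z ∂(μ.prod μ), ‖z.2‖ = 1 := by
    rw [ae_iff]
    have : {z : EuclideanSpace ℝ (Fin p) × EuclideanSpace ℝ (Fin p) | ¬ ‖z.2‖ = 1}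
        = Set.univ ×ˢ {x : EuclideanSpace ℝ (Fin p) | ¬ ‖x‖ = 1} := by
      ext z; simp
    rw [this, Measure.prod_prod, hμ0, mul_zero]
  -- integrability on the product
  have hcont : Continuous (fun z : EuclideanSpace ℝ (Fin p) × EuclideanSpace ℝ (Fin p) =>
      (∑ i : Fin p, ∑ j : Fin p, z.1 i * A i j * z.2 j) ^ 4) := by
    refine (Continuous.pow ?_ 4)
    refine continuous_finset_sum _ fun i _ => continuous_finset_sum _ fun j _ => ?_
    exact (((cont_coord i).comp continuous_fst).mul continuous_const).mul
      ((cont_coord j).comp continuous_snd)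
  have hInt : Integrable (fun z : EuclideanSpace ℝ (Fin p) × EuclideanSpace ℝ (Fin p) =>
      (∑ i : Fin p, ∑ j : Fin p, z.1 i * A i j * z.2 j) ^ 4) (μ.prod μ) := by
    refine Integrable.mono' (integrable_const ((∑ i : Fin p, ∑ j : Fin p, |A i j|)^4))
      hcont.aestronglyMeasurable ?_
    filter_upwards [hae1, hae2] with z h1 h2
    rw [Real.norm_eq_abs, abs_pow]
    have hb : |∑ i : Fin p, ∑ j : Fin p, z.1 i * A i j * z.2 j|
        ≤ ∑ i : Fin p, ∑ j : Fin p, |A i j| := by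
      refine (Finset.abs_sum_le_sum_abs _ _).trans (Finset.sum_le_sum fun i _ => ?_)
      refine (Finset.abs_sum_le_sum_abs _ _).trans (Finset.sum_le_sum fun j _ => ?_)
      rw [abs_mul, abs_mul]
      have hu : |z.1 i| ≤ 1 := (abs_coord_le' z.1 i).trans h1.le
      have hv : |z.2 j| ≤ 1 := (abs_coord_le' z.2 j).trans h2.le
      calc |z.1 i| * |A i j| * |z.2 j| ≤ 1 * |A i j| * 1 :=
            mul_le_mul (mul_le_mul hu le_rfl (abs_nonneg _) zero_le_one) hv
              (abs_nonneg _) (by positivity)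
        _ = |A i j| := by ring
    exact pow_le_pow_left₀ (abs_nonneg _) hb 4
  rw [MeasureTheory.integral_prod _ hInt]
  -- inner integral
  have hinner : ∀ u : EuclideanSpace ℝ (Fin p),
      ∫ v, (∑ i : Fin p, ∑ j : Fin p, u i * A i j * v j) ^ 4 ∂μ
        = 3/q * (∑ j, (∑ i, u i * A i j)^2)^2 := by
    intro u
    rw [integral_reorder _ (fun v : EuclideanSpace ℝ (Fin p) =>
        (∑ j, (∑ i, u i * A i j) * v j)^4) (fun v => by
      congr 1
      rw [Finset.sum_comm]
      exact Finset.sum_congr rfl fun j _ => (Finset.sum_mul _ _ _).symm)]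
    exact intA hsupp hinv hp (fun j => ∑ i, u i * A i j)
  rw [integral_reorder _ _ hinner]
  -- rewrite as quadratic form in u
  have base : ∀ x : EuclideanSpace ℝ (Fin p), (∑ j, (∑ i, x i * A i j)^2)
      = ∑ i, ∑ k, (∑ j, A i j * A k j) * (x i * x k) := by
    intro x
    have e : ∀ j, (∑ i, x i * A i j)^2 = ∑ i, ∑ k, (x i * A i j) * (x k * A k j) := fun j => by
      rw [sq, Finset.sum_mul_sum]
    rw [Finset.sum_congr rfl fun j _ => e j, Finset.sum_comm]
    refine Finset.sum_congr rfl fun i _ => ?_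
    rw [Finset.sum_comm]
    refine Finset.sum_congr rfl fun k _ => ?_
    rw [Finset.sum_mul]
    exact Finset.sum_congr rfl fun j _ => by ring
  rw [integral_reorder _ (fun x : EuclideanSpace ℝ (Fin p) =>
      3/q * ((∑ i, ∑ k, (∑ j, A i j * A k j) * (x i * x k))^2)) (fun x => by rw [base x])]
  rw [integral_const_mul, intB hsupp hinv hp (fun i k => ∑ j, A i j * A k j)]
  -- final estimates
  set t : ℝ := ∑ i, ∑ j, A i j * A i j with htdef
  have ht0 : 0 ≤ t := Finset.sum_nonneg fun i _ => Finset.sum_nonneg fun j _ => mul_self_nonneg _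
  set s : ℝ := ∑ i, ∑ k, (∑ j, A i j * A k j) * (∑ j, A i j * A k j) with hsdef
  have hsym : (∑ i, ∑ k, (∑ j, A i j * A k j) * (∑ j, A k j * A i j)) = s := by
    refine Finset.sum_congr rfl fun i _ => Finset.sum_congr rfl fun k _ => ?_
    have h : (∑ j, A k j * A i j) = ∑ j, A i j * A k j :=
      Finset.sum_congr rfl fun j _ => mul_comm _ _
    rw [h]
  have hst : s ≤ t^2 := by
    have hCS : ∀ i k : Fin p, (∑ j, A i j * A k j) * (∑ j, A i j * A k j)
        ≤ (∑ j, A i j ^2) * (∑ j, A k j ^2) := by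
      intro i k
      rw [← sq]
      exact Finset.sum_mul_sq_le_sq_mul_sq _ _ _
    refine le_trans (Finset.sum_le_sum fun i (_ : i ∈ Finset.univ) =>
      Finset.sum_le_sum fun k (_ : k ∈ Finset.univ) => hCS i k) ?_
    have : ∑ i : Fin p, ∑ k : Fin p, (∑ j, A i j ^2) * (∑ j, A k j ^2)
        = (∑ i : Fin p, ∑ j, A i j ^2)^2 := by
      rw [sq, Finset.sum_mul_sum]
    rw [this]
    have h2 : (∑ i : Fin p, ∑ j, A i j ^2) = t :=
      Finset.sum_congr rfl fun i _ => Finset.sum_congr rfl fun j _ => by ring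
    rw [h2]
  have htr : Matrix.trace (A * A) = t := by
    have hAs : ∀ i j, A j i = A i j := fun i j => congrFun (congrFun hA i) j
    simp only [Matrix.trace, Matrix.diag, Matrix.mul_apply]
    exact Finset.sum_congr rfl fun i _ => Finset.sum_congr rfl fun j _ => by rw [hAs i j]
  rw [htr, hsym]
  show 3/q * (1/q * (t^2 + s + s)) ≤ 9/(p:ℝ)^4 * t^2
  have hq4 : (p:ℝ)^4 ≤ q^2 := by
    rw [hqdef]; nlinarith [hp']
  calc 3/q * (1/q * (t^2 + s + s)) ≤ 3/q * (1/q * (t^2 + t^2 + t^2)) := by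
        gcongr <;> positivity
    _ = 9/q^2 * t^2 := by field_simp; ring
    _ ≤ 9/(p:ℝ)^4 * t^2 := by
        refine mul_le_mul_of_nonneg_right ?_ (sq_nonneg t)
        exact div_le_div_of_nonneg_left (by norm_num) (by positivity) hq4
    _ = 9/(p:ℝ)^4 * t^2 := rfl
end
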